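/- arXiv:2009.09723 — 5 statements merged into one kernel-verified Lean document; each statement's English description precedes it below -/
import Mathlib

section
/- Let X be a finite nonempty set with n = |X|, and let Δ_1, …, Δ_N be subsets of X. For each x ∈ X and t ∈ {0, 1, …, N}, define the count c_t(x) = #{s : 1 ≤ s ≤ t and x ∈ Δ_s} and the weight w_t(x) = (1/n)·2^{c_t(x)} (so w_0(x) = 1/n and each step t doubles the weights of exactly the elements of Δ_t). Assume that for every t ∈ {1, …, N}, Σ_{x ∈ Δ_t} w_{t−1}(x) < 1. Then for every x ∈ X, the final count satisfies c_N(x) < log₂(2n), i.e., the weight of any element of X is doubled at most lg(2|X|) times. -/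
open Finset

/-- Lemma 1 of the paper. In the teaching oracle's weight dynamics
over a finite nonempty instance space `X` with `n = |X|`, where each step
`t ∈ {1, …, N}` doubles the weights of exactly the elements of `Δ t`
(so `w t x = (1/n) * 2 ^ (c t x)` with `c t x = #{s : 1 ≤ s ≤ t, x ∈ Δ s}`),
and every doubling step `t` satisfies `∑ x ∈ Δ t, w (t-1) x < 1`,
the final count of any `x ∈ X` satisfies `c N x < log₂ (2n)`. -/
theorem weight_doubled_at_most_lg_card
    {X : Type*} [Fintype X] [Nonempty X] [DecidableEq X]
    (N : ℕ) (Δ : ℕ → Finset X)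
    (c : ℕ → X → ℕ)
    (hc : ∀ t x, c t x = ((Finset.Icc 1 t).filter (fun s => x ∈ Δ s)).card)
    (w : ℕ → X → ℝ)
    (hw : ∀ t x, w t x = (1 / (Fintype.card X : ℝ)) * 2 ^ (c t x))
    (hstep : ∀ t, 1 ≤ t → t ≤ N → ∑ x ∈ Δ t, w (t - 1) x < 1) :
    ∀ x : X, (c N x : ℝ) < Real.logb 2 (2 * Fintype.card X) := by
  intro x
  have hn : (1 : ℝ) ≤ (Fintype.card X : ℝ) := by
    exact_mod_cast Fintype.card_pos
  have hnpos : (0 : ℝ) < (Fintype.card X : ℝ) := lt_of_lt_of_le one_pos hn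
  -- key claim: 2 ^ (c N x) < 2 * n
  have key : (2 : ℝ) ^ (c N x) < 2 * Fintype.card X := by
    set S := (Finset.Icc 1 N).filter (fun s => x ∈ Δ s) with hS
    rcases S.eq_empty_or_nonempty with hSe | hSne
    · have : c N x = 0 := by rw [hc, ← hS, hSe]; simp
      rw [this]
      simpa using lt_of_lt_of_le (by norm_num : (1:ℝ) < 2) (by linarith)
    · set t := S.max' hSne with ht
      have htS : t ∈ S := S.max'_mem hSne
      have ht1 : 1 ≤ t := (Finset.mem_Icc.1 (Finset.mem_filter.1 htS).1).1
      have htN : t ≤ N := (Finset.mem_Icc.1 (Finset.mem_filter.1 htS).1).2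
      have hxt : x ∈ Δ t := (Finset.mem_filter.1 htS).2
      -- c N x = c (t-1) x + 1
      have hfilter : (Finset.Icc 1 t).filter (fun s => x ∈ Δ s) = S := by
        rw [hS]
        apply Finset.Subset.antisymm
        · exact Finset.filter_subset_filter _ (Finset.Icc_subset_Icc_right htN)
        · intro s hs
          have := S.le_max' s hs
          rw [Finset.mem_filter, Finset.mem_Icc] at hs ⊢
          exact ⟨⟨hs.1.1, this⟩, hs.2⟩
      have hIcc : Finset.Icc 1 t = insert t (Finset.Icc 1 (t-1)) := by
        ext s
        simp only [Finset.mem_Icc, Finset.mem_insert]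
        omega
      have hcN : c N x = c (t-1) x + 1 := by
        rw [hc, ← hS, ← hfilter, hIcc, Finset.filter_insert, if_pos hxt,
          Finset.card_insert_of_notMem (by simp [Finset.mem_Icc]; omega), hc]
      -- bound
      have hle : w (t-1) x ≤ ∑ y ∈ Δ t, w (t-1) y :=
        Finset.single_le_sum (fun y _ => by rw [hw]; positivity) hxt
      have hlt : w (t-1) x < 1 := lt_of_le_of_lt hle (hstep t ht1 htN)
      rw [hw] at hlt
      have h2 : (2:ℝ) ^ (c (t-1) x) < Fintype.card X := by
        rw [div_mul_eq_mul_div, div_lt_one hnpos] at hlt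
        linarith
      rw [hcN, pow_succ]
      linarith
  calc (c N x : ℝ) = Real.logb 2 ((2:ℝ) ^ (c N x)) := by
        simp [Real.logb_pow]
    _ < Real.logb 2 (2 * Fintype.card X) :=
        Real.logb_lt_logb (by norm_num) (by positivity) key
end

section
/- Let X be a finite nonempty set with n = |X|, and let Δ_1, …, Δ_N be subsets of X with weights defined as w_t(x) = (1/n)·2^{c_t(x)}, where c_t(x) = #{s : 1 ≤ s ≤ t and x ∈ Δ_s}. Assume that for every t ∈ {1, …, N}, Σ_{x ∈ Δ_t} w_{t−1}(x) < 1. Let T ⊆ X be a finite set such that Δ_t ∩ T ≠ ∅ for every t ∈ {1, …, N}. Then N ≤ |T| · log₂(2n). In words: if every doubling step doubles the weight of at least one element of T, the total number of doubling steps is at most |T| lg(2|X|). -/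
open Finset

/-- first part of Lemma 2 of the paper. With the teaching oracle's
weight dynamics (`w t x = (1/n) * 2 ^ (c t x)`, `c t x = #{s : 1 ≤ s ≤ t, x ∈ Δ s}`,
each doubling step `t` satisfying `∑ x ∈ Δ t, w (t-1) x < 1`), if every doubling
region `Δ t` (for `1 ≤ t ≤ N`) intersects a fixed finite set `T ⊆ X`, then the
total number of doubling steps satisfies `N ≤ |T| * log₂ (2n)`. -/
theorem number_of_doublings_le
    {X : Type*} [Fintype X] [Nonempty X] [DecidableEq X]
    (N : ℕ) (Δ : ℕ → Finset X)
    (c : ℕ → X → ℕ)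
    (hc : ∀ t x, c t x = ((Finset.Icc 1 t).filter (fun s => x ∈ Δ s)).card)
    (w : ℕ → X → ℝ)
    (hw : ∀ t x, w t x = (1 / (Fintype.card X : ℝ)) * 2 ^ (c t x))
    (hstep : ∀ t, 1 ≤ t → t ≤ N → ∑ x ∈ Δ t, w (t - 1) x < 1)
    (T : Finset X)
    (hT : ∀ t, 1 ≤ t → t ≤ N → ∃ x ∈ Δ t, x ∈ T) :
    (N : ℝ) ≤ T.card * Real.logb 2 (2 * Fintype.card X) := by
  have hn : (0:ℝ) < Fintype.card X := by
    exact_mod_cast Fintype.card_pos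
  -- c at 0 is 0
  have hc0 : ∀ x, c 0 x = 0 := by
    intro x; rw [hc]; simp
  -- c succ
  have hcsucc : ∀ t x, c (t+1) x = c t x + (if x ∈ Δ (t+1) then 1 else 0) := by
    intro t x
    rw [hc, hc]
    have : Finset.Icc 1 (t+1) = insert (t+1) (Finset.Icc 1 t) := by
      rw [← Finset.insert_Icc_right_eq_Icc_add_one (by omega)]
    rw [this, Finset.filter_insert]
    split
    · rw [Finset.card_insert_of_notMem (by simp)]
    · simp
  -- key bound
  have key : ∀ t, t ≤ N → ∀ x, (2:ℝ) ^ (c t x) < 2 * Fintype.card X := by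
    intro t
    induction t with
    | zero =>
      intro _ x
      have hn1 : (1:ℝ) ≤ Fintype.card X := by exact_mod_cast Fintype.card_pos
      rw [hc0]; simp; linarith
    | succ t ih =>
      intro ht x
      rw [hcsucc]
      by_cases hx : x ∈ Δ (t+1)
      · simp only [hx, if_true]
        have hs := hstep (t+1) (by omega) ht
        simp only [Nat.add_sub_cancel] at hs
        have hle : w t x ≤ ∑ y ∈ Δ (t+1), w t y := by
          apply Finset.single_le_sum _ hx
          intro y _
          rw [hw]; positivity
        have : w t x < 1 := lt_of_le_of_lt hle hs
        rw [hw] at this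
        have h2 : (2:ℝ) ^ (c t x) < Fintype.card X := by
          rw [div_mul_eq_mul_div, one_mul, div_lt_one hn] at this
          exact this
        rw [pow_succ]
        linarith
      · simp only [hx, if_false, add_zero]
        exact ih (by omega) x
  -- c N x ≤ logb 2 (2n) for all x
  have hcbound : ∀ x, (c N x : ℝ) ≤ Real.logb 2 (2 * Fintype.card X) := by
    intro x
    rw [Real.le_logb_iff_rpow_le one_lt_two (by linarith)]
    rw [Real.rpow_natCast]
    exact le_of_lt (key N le_rfl x)
  -- N ≤ ∑ x ∈ T, c N x
  have hsum : (N : ℝ) ≤ ∑ x ∈ T, (c N x : ℝ) := by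
    have h1 : N = ∑ t ∈ Finset.Icc 1 N, 1 := by simp
    have h2 : ∀ t ∈ Finset.Icc 1 N, 1 ≤ ((Δ t) ∩ T).card := by
      intro t ht
      rw [Finset.mem_Icc] at ht
      obtain ⟨x, hx1, hx2⟩ := hT t ht.1 ht.2
      exact Finset.card_pos.mpr ⟨x, Finset.mem_inter.mpr ⟨hx1, hx2⟩⟩
    have h3 : N ≤ ∑ t ∈ Finset.Icc 1 N, ((Δ t) ∩ T).card := by
      calc N = ∑ t ∈ Finset.Icc 1 N, 1 := h1
        _ ≤ _ := Finset.sum_le_sum h2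
    have h4 : ∑ t ∈ Finset.Icc 1 N, ((Δ t) ∩ T).card = ∑ x ∈ T, c N x := by
      have heq : ∀ t, ((Δ t) ∩ T).card = ∑ x ∈ T, (if x ∈ Δ t then 1 else 0) := by
        intro t
        rw [Finset.inter_comm, ← Finset.filter_mem_eq_inter, Finset.card_filter]
      simp_rw [heq]
      rw [Finset.sum_comm]
      refine Finset.sum_congr rfl fun x _ => ?_
      rw [hc, Finset.card_filter]
    exact_mod_cast h3.trans_eq h4
  calc (N:ℝ) ≤ ∑ x ∈ T, (c N x : ℝ) := hsum
    _ ≤ ∑ x ∈ T, Real.logb 2 (2 * Fintype.card X) := Finset.sum_le_sum (fun x _ => hcbound x)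
    _ = T.card * Real.logb 2 (2 * Fintype.card X) := by rw [Finset.sum_const, nsmul_eq_mul]
end

section
/- Let X be a finite nonempty set with n = |X|, and let Δ_1, …, Δ_N be subsets of X with weights defined as w_t(x) = (1/n)·2^{c_t(x)}, where c_t(x) = #{s : 1 ≤ s ≤ t and x ∈ Δ_s}. Assume that for every t ∈ {1, …, N}, Σ_{x ∈ Δ_t} w_{t−1}(x) < 1. Then the final total weight satisfies Σ_{x ∈ X} w_N(x) ≤ 1 + N. Moreover, if additionally there is a finite set T ⊆ X with Δ_t ∩ T ≠ ∅ for every t, then Σ_{x ∈ X} w_N(x) ≤ 1 + |T| · log₂(2n). -/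
open Finset

/-- second part of Lemma 2 of the paper. With the teaching oracle's
weight dynamics (`w t x = (1/n) * 2 ^ (c t x)`, `c t x = #{s : 1 ≤ s ≤ t, x ∈ Δ s}`,
each doubling step `t` satisfying `∑ x ∈ Δ t, w (t-1) x < 1`), the final total weight
satisfies `∑ x, w N x ≤ 1 + N`; moreover, if every `Δ t` (for `1 ≤ t ≤ N`) intersects
a fixed finite set `T ⊆ X`, then `∑ x, w N x ≤ 1 + |T| * log₂ (2n)`. -/
theorem total_weight_le
    {X : Type*} [Fintype X] [Nonempty X] [DecidableEq X]
    (N : ℕ) (Δ : ℕ → Finset X)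
    (c : ℕ → X → ℕ)
    (hc : ∀ t x, c t x = ((Finset.Icc 1 t).filter (fun s => x ∈ Δ s)).card)
    (w : ℕ → X → ℝ)
    (hw : ∀ t x, w t x = (1 / (Fintype.card X : ℝ)) * 2 ^ (c t x))
    (hstep : ∀ t, 1 ≤ t → t ≤ N → ∑ x ∈ Δ t, w (t - 1) x < 1) :
    (∑ x : X, w N x ≤ 1 + N) ∧
      (∀ T : Finset X, (∀ t, 1 ≤ t → t ≤ N → ∃ x ∈ Δ t, x ∈ T) →
        ∑ x : X, w N x ≤ 1 + T.card * Real.logb 2 (2 * Fintype.card X)) := by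
  have hn0 : 0 < Fintype.card X := Fintype.card_pos
  have hn : (0:ℝ) < (Fintype.card X : ℝ) := by exact_mod_cast hn0
  have hwpos : ∀ t x, 0 < w t x := by
    intro t x; rw [hw]; positivity
  -- counter recurrence
  have hcs : ∀ t x, c (t+1) x = c t x + (if x ∈ Δ (t+1) then 1 else 0) := by
    intro t x
    rw [hc, hc]
    have : Finset.Icc 1 (t+1) = insert (t+1) (Finset.Icc 1 t) := by
      ext s; simp [Finset.mem_Icc]; omega
    rw [this, Finset.filter_insert]
    split_ifs with h
    · rw [Finset.card_insert_of_notMem (by simp)]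
    · simp
  have hwrec : ∀ t x, w (t+1) x = w t x + (if x ∈ Δ (t+1) then w t x else 0) := by
    intro t x
    rw [hw, hw, hcs]
    split_ifs with h
    · rw [pow_succ]; ring
    · simp
  have hsumrec : ∀ t, ∑ x : X, w (t+1) x = (∑ x : X, w t x) + ∑ x ∈ Δ (t+1), w t x := by
    intro t
    calc ∑ x : X, w (t+1) x
        = ∑ x : X, (w t x + if x ∈ Δ (t+1) then w t x else 0) :=
          Finset.sum_congr rfl (fun x _ => hwrec t x)
      _ = (∑ x : X, w t x) + ∑ x : X, (if x ∈ Δ (t+1) then w t x else 0) :=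
          Finset.sum_add_distrib
      _ = (∑ x : X, w t x) + ∑ x ∈ Δ (t+1), w t x := by
          congr 1
          rw [Finset.sum_ite_mem, Finset.univ_inter]
  -- base case: total weight 1
  have hbase : ∑ x : X, w 0 x = 1 := by
    have h0 : ∀ x : X, w 0 x = 1 / (Fintype.card X : ℝ) := by
      intro x; rw [hw, hc]; simp
    rw [Finset.sum_congr rfl (fun x _ => h0 x), Finset.sum_const, Finset.card_univ,
      nsmul_eq_mul]
    field_simp
  -- part 1
  have part1 : ∀ t, t ≤ N → ∑ x : X, w t x ≤ 1 + t := by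
    intro t
    induction t with
    | zero => intro _; rw [hbase]; simp
    | succ t ih =>
      intro ht
      have h1 := hsumrec t
      have h2 := hstep (t+1) (by omega) ht
      simp only [Nat.add_sub_cancel] at h2
      have h3 := ih (by omega)
      push_cast
      push_cast at h3
      linarith
  refine ⟨part1 N le_rfl, ?_⟩
  intro T hT
  have h1n : (1:ℝ) ≤ Fintype.card X := by exact_mod_cast hn0
  have h2n : (1:ℝ) ≤ 2 * Fintype.card X := by linarith
  have hlogb : ∀ x : X, (c N x : ℝ) ≤ Real.logb 2 (2 * Fintype.card X) := by
    intro x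
    rcases Nat.eq_zero_or_pos (c N x) with h0 | hpos
    · rw [h0]
      exact_mod_cast Real.logb_nonneg one_lt_two h2n
    · set S := (Finset.Icc 1 N).filter (fun s => x ∈ Δ s) with hS
      have hScard : S.card = c N x := (hc N x).symm
      have hSne : S.Nonempty := by
        rw [← Finset.card_pos, hScard]; exact hpos
      set t := S.max' hSne with htdef
      have htS : t ∈ S := S.max'_mem hSne
      have ht1 : 1 ≤ t := (Finset.mem_Icc.1 (Finset.mem_filter.1 htS).1).1
      have htN : t ≤ N := (Finset.mem_Icc.1 (Finset.mem_filter.1 htS).1).2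
      have hxΔ : x ∈ Δ t := (Finset.mem_filter.1 htS).2
      have hcount : c (t-1) x = c N x - 1 := by
        rw [hc, ← hScard]
        have heq : (Finset.Icc 1 (t-1)).filter (fun s => x ∈ Δ s) = S.erase t := by
          ext s
          simp only [Finset.mem_filter, Finset.mem_Icc, Finset.mem_erase, hS]
          constructor
          · rintro ⟨⟨h1, h2⟩, h3⟩
            exact ⟨by omega, ⟨by omega, by omega⟩, h3⟩
          · rintro ⟨hne, ⟨h1s, hsN⟩, hx⟩
            have hle : s ≤ t := S.le_max' s
              (Finset.mem_filter.2 ⟨Finset.mem_Icc.2 ⟨h1s, hsN⟩, hx⟩)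
            exact ⟨⟨h1s, by omega⟩, hx⟩
        rw [heq, Finset.card_erase_of_mem htS]
      have hw1 : w (t-1) x < 1 := by
        have hsum := hstep t ht1 htN
        have hle : w (t-1) x ≤ ∑ y ∈ Δ t, w (t-1) y :=
          Finset.single_le_sum (fun y _ => (hwpos _ y).le) hxΔ
        linarith
      rw [hw, hcount, one_div, inv_mul_eq_div, div_lt_one hn] at hw1
      have hpow : (2:ℝ) ^ (c N x) ≤ 2 * Fintype.card X := by
        have : c N x = (c N x - 1) + 1 := by omega
        rw [this, pow_succ]
        nlinarith
      calc (c N x : ℝ) = Real.logb 2 ((2:ℝ) ^ (c N x)) := by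
            rw [Real.logb_pow, Real.logb_self_eq_one one_lt_two, mul_one]
        _ ≤ Real.logb 2 (2 * Fintype.card X) :=
            Real.logb_le_logb_of_le one_lt_two (by positivity) hpow
  have hNsum : N ≤ ∑ x ∈ T, c N x := by
    have hsub : Finset.Icc 1 N ⊆
        T.biUnion (fun x => (Finset.Icc 1 N).filter (fun s => x ∈ Δ s)) := by
      intro s hs
      obtain ⟨x, hxΔ, hxT⟩ := hT s (Finset.mem_Icc.1 hs).1 (Finset.mem_Icc.1 hs).2
      exact Finset.mem_biUnion.2 ⟨x, hxT, Finset.mem_filter.2 ⟨hs, hxΔ⟩⟩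
    calc N = (Finset.Icc 1 N).card := by rw [Nat.card_Icc]; omega
      _ ≤ _ := Finset.card_le_card hsub
      _ ≤ ∑ x ∈ T, ((Finset.Icc 1 N).filter (fun s => x ∈ Δ s)).card :=
          Finset.card_biUnion_le
      _ = ∑ x ∈ T, c N x := by
          exact Finset.sum_congr rfl (fun x _ => (hc N x).symm)
  have hfin : (N:ℝ) ≤ T.card * Real.logb 2 (2 * Fintype.card X) := by
    calc (N:ℝ) ≤ ∑ x ∈ T, (c N x : ℝ) := by exact_mod_cast hNsum
      _ ≤ ∑ x ∈ T, Real.logb 2 (2 * Fintype.card X) :=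
          Finset.sum_le_sum (fun x _ => hlogb x)
      _ = T.card * Real.logb 2 (2 * Fintype.card X) := by
          rw [Finset.sum_const, nsmul_eq_mul]
  linarith [part1 N le_rfl]
end

section
/- Let X be a finite nonempty set with n = |X|, let Δ_1, …, Δ_N be subsets of X with weights w_t(x) = (1/n)·2^{c_t(x)} where c_t(x) = #{s : 1 ≤ s ≤ t and x ∈ Δ_s}, assume Σ_{x ∈ Δ_t} w_{t−1}(x) < 1 for every t ∈ {1, …, N}, and assume every Δ_t intersects a fixed finite set T ⊆ X. Let 0 < δ < 1, let m ≥ 1 be a real number, let λ = ln(m/δ) > 0, and let (τ_x)_{x ∈ X} be independent exponential random variables with rate λ. Then the expected number of elements x ∈ X whose final weight exceeds their threshold, E[#{x ∈ X : w_N(x) > τ_x}], is at most (1 + |T| · log₂(2n)) · (ln m + ln(1/δ)). -/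
open MeasureTheory ProbabilityTheory Finset

/-- quantitative content of Proposition 1 of the paper. Combine the
weight dynamics of the teaching oracle (weights start at `1/n`, are doubled exactly in
the steps whose region `Δ t` contains them, each doubling step has pre-doubling total
weight `< 1` on `Δ t`, and every `Δ t` intersects the teaching set `T`) with i.i.d.
exponential thresholds `τ x` of rate `λ = ln (m / δ)`: the expected number of
instances whose final weight exceeds their threshold is at most
`(1 + |T| * log₂ (2n)) * (ln m + ln (1/δ))`. -/
theorem expected_training_set_size_le
    {X : Type*} [Fintype X] [Nonempty X] [DecidableEq X]
    (N : ℕ) (Δ : ℕ → Finset X)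
    (c : ℕ → X → ℕ)
    (hc : ∀ t x, c t x = ((Finset.Icc 1 t).filter (fun s => x ∈ Δ s)).card)
    (w : ℕ → X → ℝ)
    (hw : ∀ t x, w t x = (1 / (Fintype.card X : ℝ)) * 2 ^ (c t x))
    (hstep : ∀ t, 1 ≤ t → t ≤ N → ∑ x ∈ Δ t, w (t - 1) x < 1)
    (T : Finset X)
    (hT : ∀ t, 1 ≤ t → t ≤ N → ∃ x ∈ Δ t, x ∈ T)
    {Ω : Type*} [MeasurableSpace Ω] (μ : Measure Ω) [IsProbabilityMeasure μ]
    (δ : ℝ) (hδ₀ : 0 < δ) (hδ₁ : δ < 1)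
    (m : ℝ) (hm : 1 ≤ m)
    (l : ℝ) (hlvalue : l = Real.log (m / δ)) (hl : 0 < l)
    (τ : X → Ω → ℝ) (hτ : ∀ x, Measurable (τ x))
    (hmap : ∀ x, μ.map (τ x) = expMeasure l)
    (hindep : iIndepFun τ μ) :
    (∫ ω, ((Finset.univ.filter (fun x => τ x ω < w N x)).card : ℝ) ∂μ)
      ≤ (1 + T.card * Real.logb 2 (2 * Fintype.card X)) *
          (Real.log m + Real.log (1 / δ)) := by
  classical
  set n := Fintype.card X with hn
  have hn0 : 0 < n := Fintype.card_pos
  have hnR : (0:ℝ) < n := by exact_mod_cast hn0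
  -- weights are positive
  have hwpos : ∀ t x, 0 < w t x := by
    intro t x; rw [hw]; positivity
  -- one-step recurrence for weights
  have hwsucc : ∀ k x, w (k+1) x = w k x + (if x ∈ Δ (k+1) then w k x else 0) := by
    intro k x
    have hIcc : Finset.Icc 1 (k+1) = insert (k+1) (Finset.Icc 1 k) := by
      ext s; simp [Finset.mem_Icc, Finset.mem_insert]; omega
    have hnm : (k+1) ∉ Finset.Icc 1 k := by simp
    have hcs : c (k+1) x = c k x + (if x ∈ Δ (k+1) then 1 else 0) := by
      rw [hc, hc, hIcc, Finset.filter_insert]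
      split_ifs with h
      · rw [Finset.card_insert_of_notMem (fun hmem => hnm (Finset.mem_of_mem_filter _ hmem))]
      · simp
    rw [hw, hw, hcs]
    split_ifs with h
    · rw [pow_succ]; ring
    · ring
  -- Lemma 2a: total weight after k steps is at most 1 + k
  have hsum : ∀ k, k ≤ N → ∑ x : X, w k x ≤ 1 + (k : ℝ) := by
    intro k
    induction k with
    | zero =>
      intro _
      have h0 : ∀ x : X, w 0 x = 1 / (n:ℝ) := by
        intro x
        rw [hw, hc]
        simp
      rw [Finset.sum_congr rfl (fun x _ => h0 x), Finset.sum_const, Finset.card_univ]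
      rw [nsmul_eq_mul]
      rw [mul_one_div, div_self (ne_of_gt hnR)]
      norm_num
    | succ k ih =>
      intro hk
      have hk' : k ≤ N := by omega
      have h1 : ∑ x : X, w (k+1) x = (∑ x : X, w k x) + ∑ x ∈ Δ (k+1), w k x := by
        rw [Finset.sum_congr rfl (fun x _ => hwsucc k x), Finset.sum_add_distrib]
        congr 1
        rw [Finset.sum_ite_mem, Finset.univ_inter]
      have h2 : ∑ x ∈ Δ (k+1), w k x < 1 := by
        have := hstep (k+1) (by omega) hk
        simpa using this
      have := ih hk'
      rw [h1]
      push_cast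
      linarith
  -- Lemma 2b: each element's counter is at most log₂ (2n)
  have hcb : ∀ x : X, 0 < c N x → (c N x : ℝ) ≤ Real.logb 2 (2 * n) := by
    intro x hx0
    set F := (Finset.Icc 1 N).filter (fun s => x ∈ Δ s) with hF
    have hFne : F.Nonempty := by
      rw [← Finset.card_pos, hF, ← hc]; exact hx0
    set t := F.max' hFne with ht
    have htF : t ∈ F := F.max'_mem hFne
    have htIcc : t ∈ Finset.Icc 1 N := Finset.mem_of_mem_filter _ htF
    have ht1 : 1 ≤ t := (Finset.mem_Icc.mp htIcc).1
    have htN : t ≤ N := (Finset.mem_Icc.mp htIcc).2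
    have hxΔ : x ∈ Δ t := (Finset.mem_filter.mp htF).2
    -- the weight of x before step t is < 1
    have hwlt : w (t-1) x < 1 := by
      refine lt_of_le_of_lt ?_ (hstep t ht1 htN)
      exact Finset.single_le_sum (fun y _ => (hwpos (t-1) y).le) hxΔ
    -- c (t-1) x = c N x - 1
    have hct : c (t-1) x = c N x - 1 := by
      rw [hc, hc]
      have : (Finset.Icc 1 (t-1)).filter (fun s => x ∈ Δ s) = F.erase t := by
        ext s
        simp only [Finset.mem_filter, Finset.mem_Icc, Finset.mem_erase, hF]
        constructor
        · rintro ⟨⟨hs1, hs2⟩, hsΔ⟩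
          exact ⟨by omega, ⟨hs1, by omega⟩, hsΔ⟩
        · rintro ⟨hst, ⟨hs1, hs2⟩, hsΔ⟩
          have : s ≤ t := F.le_max' s (Finset.mem_filter.mpr ⟨Finset.mem_Icc.mpr ⟨hs1, hs2⟩, hsΔ⟩)
          exact ⟨⟨hs1, by omega⟩, hsΔ⟩
      rw [this, Finset.card_erase_of_mem htF]
    -- hence 2 ^ (c N x - 1) < n
    have h2n : (2:ℝ) ^ (c N x - 1) < n := by
      rw [hw, hct] at hwlt
      rw [one_div, inv_mul_eq_div, div_lt_one hnR] at hwlt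
      exact hwlt
    have h2n' : (2:ℝ) ^ (c N x) < 2 * n := by
      have : c N x = (c N x - 1) + 1 := by omega
      rw [this, pow_succ]
      linarith
    have h2pos : (0:ℝ) < 2 ^ (c N x) := by positivity
    calc (c N x : ℝ) = Real.logb 2 ((2:ℝ) ^ (c N x)) := by
          rw [Real.logb_pow, Real.logb_self_eq_one (by norm_num), mul_one]
      _ ≤ Real.logb 2 (2 * n) := Real.logb_le_logb_of_le (by norm_num) h2pos h2n'.le
  -- Lemma 2c: N ≤ |T| · log₂ (2n)
  have hNbound : (N : ℝ) ≤ T.card * Real.logb 2 (2 * n) := by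
    set f : ℕ → X := fun t =>
      if h : 1 ≤ t ∧ t ≤ N then (hT t h.1 h.2).choose else Classical.arbitrary X with hf
    have hf1 : ∀ t ∈ Finset.Icc 1 N, f t ∈ Δ t ∧ f t ∈ T := by
      intro t ht
      rw [Finset.mem_Icc] at ht
      rw [hf]
      simp only [dif_pos ht]
      exact (hT t ht.1 ht.2).choose_spec
    have hNsum : N ≤ ∑ x ∈ T, c N x := by
      have hcard : (Finset.Icc 1 N).card = N := by rw [Nat.card_Icc]; omega
      calc N = (Finset.Icc 1 N).card := hcard.symm
        _ = ∑ x ∈ T, ((Finset.Icc 1 N).filter (fun t => f t = x)).card :=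
            Finset.card_eq_sum_card_fiberwise (fun t ht => (hf1 t ht).2)
        _ ≤ ∑ x ∈ T, c N x := ?_
      refine Finset.sum_le_sum (fun x hx => ?_)
      rw [hc]
      apply Finset.card_le_card
      intro t ht
      rw [Finset.mem_filter] at ht ⊢
      refine ⟨ht.1, ?_⟩
      have := (hf1 t ht.1).1
      rwa [ht.2] at this
    have hsum2 : (∑ x ∈ T, (c N x : ℝ)) ≤ T.card * Real.logb 2 (2 * n) := by
      rw [← nsmul_eq_mul, ← Finset.sum_const]
      refine Finset.sum_le_sum (fun x hx => ?_)
      rcases Nat.eq_zero_or_pos (c N x) with h0 | h0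
      · rw [h0]
        push_cast
        apply Real.logb_nonneg (by norm_num)
        have : (1:ℝ) ≤ n := by exact_mod_cast hn0
        linarith
      · exact hcb x h0
    calc (N : ℝ) ≤ ∑ x ∈ T, (c N x : ℝ) := by exact_mod_cast hNsum
      _ ≤ _ := hsum2
  -- probability bound for each instance
  haveI : IsProbabilityMeasure (expMeasure l) := isProbabilityMeasure_expMeasure hl
  have key : ∀ (x : X) (a : ℝ), 0 ≤ a → (μ {ω | τ x ω < a}).toReal ≤ l * a := by
    intro x a ha
    have hset : {ω | τ x ω < a} = τ x ⁻¹' Set.Iio a := rfl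
    have h1 : μ {ω | τ x ω < a} = (μ.map (τ x)) (Set.Iio a) := by
      rw [hset, Measure.map_apply (hτ x) measurableSet_Iio]
    rw [h1, hmap x]
    have h2 : expMeasure l (Set.Iio a) ≤ expMeasure l (Set.Iic a) :=
      measure_mono Set.Iio_subset_Iic_self
    have h3 : expMeasure l (Set.Iic a) = ENNReal.ofReal (cdf (expMeasure l) a) :=
      (ofReal_cdf (expMeasure l) a).symm
    have h4 : cdf (expMeasure l) a = 1 - Real.exp (-(l * a)) := by
      rw [cdf_expMeasure_eq hl, if_pos ha]
    have h5 : 1 - Real.exp (-(l * a)) ≤ l * a := by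
      have := Real.add_one_le_exp (-(l * a))
      linarith
    have h6 : (expMeasure l (Set.Iio a)).toReal ≤ (expMeasure l (Set.Iic a)).toReal :=
      ENNReal.toReal_mono (measure_ne_top _ _) h2
    refine h6.trans ?_
    rw [h3, h4]
    have hnn : 0 ≤ 1 - Real.exp (-(l * a)) := by
      have : Real.exp (-(l * a)) ≤ 1 := by
        rw [Real.exp_le_one_iff]
        have : 0 ≤ l * a := mul_nonneg hl.le ha
        linarith
      linarith
    rw [ENNReal.toReal_ofReal hnn]
    exact h5
  -- express the integrand as a sum of indicators
  have hms : ∀ x : X, MeasurableSet {ω | τ x ω < w N x} := by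
    intro x
    exact (hτ x) measurableSet_Iio
  have hseteq : ∀ x : X, (fun ω => if τ x ω < w N x then (1:ℝ) else 0)
      = Set.indicator {ω | τ x ω < w N x} (fun _ => (1:ℝ)) := by
    intro x; funext ω
    simp [Set.indicator_apply, Set.mem_setOf_eq]
  have hint : ∀ x : X, Integrable (fun ω => if τ x ω < w N x then (1:ℝ) else 0) μ := by
    intro x
    rw [hseteq x]
    exact (integrable_const (1:ℝ)).indicator (hms x)
  have hcardsum : ∀ ω : Ω, ((Finset.univ.filter (fun x => τ x ω < w N x)).card : ℝ)
      = ∑ x : X, (if τ x ω < w N x then (1:ℝ) else 0) := by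
    intro ω
    rw [Finset.card_filter]
    push_cast
    rfl
  have hIeq : (∫ ω, ((Finset.univ.filter (fun x => τ x ω < w N x)).card : ℝ) ∂μ)
      = ∑ x : X, (μ {ω | τ x ω < w N x}).toReal := by
    rw [integral_congr_ae (Filter.Eventually.of_forall hcardsum),
      integral_finset_sum _ (fun x _ => hint x)]
    refine Finset.sum_congr rfl (fun x _ => ?_)
    rw [hseteq x, integral_indicator_const (1:ℝ) (hms x), smul_eq_mul, mul_one, measureReal_def]
  -- combine everything
  have hmain : (∑ x : X, (μ {ω | τ x ω < w N x}).toReal)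
      ≤ l * (1 + T.card * Real.logb 2 (2 * n)) := by
    have h1 : (∑ x : X, (μ {ω | τ x ω < w N x}).toReal) ≤ ∑ x : X, l * w N x :=
      Finset.sum_le_sum (fun x _ => key x (w N x) (hwpos N x).le)
    rw [← Finset.mul_sum] at h1
    refine h1.trans ?_
    have hS : ∑ x : X, w N x ≤ 1 + T.card * Real.logb 2 (2 * n) := by
      have := hsum N le_rfl
      linarith
    exact mul_le_mul_of_nonneg_left hS hl.le
  have hl' : Real.log m + Real.log (1 / δ) = l := by
    rw [hlvalue, Real.log_div (ne_of_gt (by linarith : (0:ℝ) < m)) (ne_of_gt hδ₀),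
      Real.log_div one_ne_zero (ne_of_gt hδ₀), Real.log_one]
    ring
  rw [hIeq, hl', mul_comm]
  exact hmain
end

section
/- Let X be a set, let 𝒢 be a finite nonempty set with a distinguished element g*, and let 0 < δ < 1. Set λ = ln(|𝒢|/δ). Suppose that (τ_x)_{x ∈ X'} are independent exponential random variables with rate λ indexed by a finite set X' ⊆ X, and that for each g ∈ 𝒢 with g ≠ g* we are given a finite set Δ_g ⊆ X' and a weight function w_g : X' → [0, ∞) with Σ_{x ∈ Δ_g} w_g(x) ≥ 1. Then the probability that there exists some g ∈ 𝒢 with g ≠ g* such that τ_x ≥ w_g(x) for all x ∈ Δ_g is at most δ. Consequently, with probability at least 1 − δ, every such g has some x ∈ Δ_g with τ_x < w_g(x). -/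
open MeasureTheory ProbabilityTheory Finset

/-- Lemma 4 of the paper. Let `𝒢` be a finite nonempty class with a
distinguished element `g*`, `0 < δ < 1`, and `λ = ln (|𝒢| / δ)`. Given independent
exponential thresholds `(τ x)_{x ∈ X'}` of rate `λ` on a finite index set `X'`, and
for each `g ≠ g*` a finite set `Δ g ⊆ X'` and weights `w g : X' → [0, ∞)` with
`∑ x ∈ Δ g, w g x ≥ 1`, the probability that some `g ≠ g*` has `τ x ≥ w g x` for all
`x ∈ Δ g` is at most `δ`; consequently, with probability at least `1 - δ`, every
`g ≠ g*` has some `x ∈ Δ g` with `τ x < w g x`. -/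
theorem prob_all_hypotheses_invalidated
    {Ω : Type*} [MeasurableSpace Ω] (μ : Measure Ω) [IsProbabilityMeasure μ]
    {𝒢 : Type*} [Fintype 𝒢] [Nonempty 𝒢] (gstar : 𝒢)
    (δ : ℝ) (hδ₀ : 0 < δ) (hδ₁ : δ < 1)
    {X' : Type*} [Fintype X']
    (l : ℝ) (hlvalue : l = Real.log ((Fintype.card 𝒢 : ℝ) / δ))
    (τ : X' → Ω → ℝ) (hτ : ∀ x, Measurable (τ x))
    (hmap : ∀ x, μ.map (τ x) = expMeasure l)
    (hindep : iIndepFun τ μ)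
    (Δ : 𝒢 → Finset X') (w : 𝒢 → X' → ℝ)
    (hw : ∀ g x, 0 ≤ w g x)
    (hw1 : ∀ g, g ≠ gstar → 1 ≤ ∑ x ∈ Δ g, w g x) :
    (μ {ω | ∃ g, g ≠ gstar ∧ ∀ x ∈ Δ g, w g x ≤ τ x ω}).toReal ≤ δ ∧
      1 - δ ≤ (μ {ω | ∀ g, g ≠ gstar → ∃ x ∈ Δ g, τ x ω < w g x}).toReal := by
  classical
  have hcard : (1 : ℝ) ≤ Fintype.card 𝒢 := by
    exact_mod_cast Fintype.card_pos
  have hl : 0 < l := by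
    rw [hlvalue]
    apply Real.log_pos
    rw [lt_div_iff₀ hδ₀]
    linarith
  haveI : IsProbabilityMeasure (expMeasure l) := isProbabilityMeasure_expMeasure hl
  -- tail probability
  have htail : ∀ (x : X') (c : ℝ), 0 ≤ c →
      μ {ω | c ≤ τ x ω} = ENNReal.ofReal (Real.exp (-(l * c))) := by
    intro x c hc
    have hset : {ω | c ≤ τ x ω} = τ x ⁻¹' Set.Ici c := rfl
    rw [hset, ← Measure.map_apply (hτ x) measurableSet_Ici, hmap]
    have hsing : expMeasure l ({c} : Set ℝ) = 0 := by
      have : expMeasure l = volume.withDensity (gammaPDF 1 l) := rfl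
      rw [this]
      exact (withDensity_absolutelyContinuous volume _) (measure_singleton c)
    have hIci : expMeasure l (Set.Ici c) = expMeasure l (Set.Ioi c) := by
      refine le_antisymm ?_ (measure_mono Set.Ioi_subset_Ici_self)
      calc expMeasure l (Set.Ici c) = expMeasure l (Set.Ioi c ∪ {c}) := by
            rw [Set.Ioi_union_left]
        _ ≤ expMeasure l (Set.Ioi c) + expMeasure l {c} := measure_union_le _ _
        _ = expMeasure l (Set.Ioi c) := by rw [hsing, add_zero]
    have hIic : expMeasure l (Set.Iic c) = ENNReal.ofReal (1 - Real.exp (-(l * c))) := by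
      rw [← ofReal_cdf (expMeasure l) c]
      congr 1
      have := cdf_expMeasure_eq hl c
      rw [this, if_pos hc]
    have hexp1 : Real.exp (-(l * c)) ≤ 1 := by
      rw [Real.exp_le_one_iff]
      simp [mul_nonneg hl.le hc]
    rw [hIci, ← Set.compl_Iic, measure_compl measurableSet_Iic (measure_ne_top _ _),
      measure_univ, hIic]
    rw [← ENNReal.ofReal_one, ← ENNReal.ofReal_sub _ (by linarith : (0:ℝ) ≤ 1 - Real.exp (-(l*c)))]
    norm_num
  -- measure of each bad event
  have hA : ∀ g, g ≠ gstar →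
      μ {ω | ∀ x ∈ Δ g, w g x ≤ τ x ω} ≤ ENNReal.ofReal (δ / Fintype.card 𝒢) := by
    intro g hg
    have hset : {ω | ∀ x ∈ Δ g, w g x ≤ τ x ω}
        = ⋂ x ∈ Δ g, (τ x ⁻¹' Set.Ici (w g x)) := by
      ext ω; simp [Set.mem_iInter]
    have hprod : μ (⋂ x ∈ Δ g, (τ x ⁻¹' Set.Ici (w g x)))
        = ∏ x ∈ Δ g, μ (τ x ⁻¹' Set.Ici (w g x)) := by
      refine hindep.meas_biInter (fun x _ => ?_)
      exact ⟨Set.Ici (w g x), measurableSet_Ici, rfl⟩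
    have hterm : ∀ x ∈ Δ g, μ (τ x ⁻¹' Set.Ici (w g x))
        = ENNReal.ofReal (Real.exp (-(l * w g x))) := by
      intro x _
      exact htail x (w g x) (hw g x)
    rw [hset, hprod, Finset.prod_congr rfl hterm]
    rw [← ENNReal.ofReal_prod_of_nonneg (fun x _ => (Real.exp_pos _).le)]
    apply ENNReal.ofReal_le_ofReal
    rw [← Real.exp_sum]
    have hsum : ∑ x ∈ Δ g, -(l * w g x) = -(l * ∑ x ∈ Δ g, w g x) := by
      simp [Finset.mul_sum]
    rw [hsum]
    have h1 : Real.exp (-(l * ∑ x ∈ Δ g, w g x)) ≤ Real.exp (-l) := by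
      apply Real.exp_le_exp.mpr
      have := hw1 g hg
      nlinarith
    refine h1.trans ?_
    rw [hlvalue, ← Real.log_inv, Real.exp_log (by positivity)]
    rw [inv_div]
  -- union bound
  set A : 𝒢 → Set Ω := fun g => {ω | ∀ x ∈ Δ g, w g x ≤ τ x ω} with hAdef
  have hAmeas : ∀ g, MeasurableSet (A g) := by
    intro g
    have h : A g = ⋂ x ∈ Δ g, (τ x ⁻¹' Set.Ici (w g x)) := by
      ext ω; simp [hAdef, Set.mem_iInter]
    rw [h]
    exact MeasurableSet.biInter (Set.to_countable _) fun x _ => (hτ x) measurableSet_Ici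
  have hEset : {ω | ∃ g, g ≠ gstar ∧ ∀ x ∈ Δ g, w g x ≤ τ x ω}
      = ⋃ g ∈ Finset.univ.filter (· ≠ gstar), A g := by
    ext ω; simp [hAdef]
  have hEmeas : MeasurableSet {ω | ∃ g, g ≠ gstar ∧ ∀ x ∈ Δ g, w g x ≤ τ x ω} := by
    rw [hEset]
    exact MeasurableSet.biUnion (Set.to_countable _) fun g _ => hAmeas g
  have hcard0 : (0:ℝ) < Fintype.card 𝒢 := by linarith
  have hE : μ {ω | ∃ g, g ≠ gstar ∧ ∀ x ∈ Δ g, w g x ≤ τ x ω} ≤ ENNReal.ofReal δ := by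
    rw [hEset]
    calc μ (⋃ g ∈ Finset.univ.filter (· ≠ gstar), A g)
        ≤ ∑ g ∈ Finset.univ.filter (· ≠ gstar), μ (A g) := measure_biUnion_finset_le _ _
      _ ≤ ∑ _g ∈ Finset.univ.filter (· ≠ gstar), ENNReal.ofReal (δ / Fintype.card 𝒢) := by
          refine Finset.sum_le_sum fun g hg => ?_
          exact hA g (by simpa using hg)
      _ = (Finset.univ.filter (· ≠ gstar)).card • ENNReal.ofReal (δ / Fintype.card 𝒢) := by
          rw [Finset.sum_const]
      _ ≤ (Fintype.card 𝒢) • ENNReal.ofReal (δ / Fintype.card 𝒢) := by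
          gcongr
          exact Finset.card_filter_le _ _
      _ = ENNReal.ofReal δ := by
          rw [nsmul_eq_mul, ← ENNReal.ofReal_natCast,
            ← ENNReal.ofReal_mul (by positivity)]
          congr 1
          field_simp
  have h1 : (μ {ω | ∃ g, g ≠ gstar ∧ ∀ x ∈ Δ g, w g x ≤ τ x ω}).toReal ≤ δ :=
    ENNReal.toReal_le_of_le_ofReal hδ₀.le hE
  refine ⟨h1, ?_⟩
  have hcompl : {ω | ∀ g, g ≠ gstar → ∃ x ∈ Δ g, τ x ω < w g x}
      = {ω | ∃ g, g ≠ gstar ∧ ∀ x ∈ Δ g, w g x ≤ τ x ω}ᶜ := by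
    ext ω
    simp only [Set.mem_setOf_eq, Set.mem_compl_iff, not_exists, not_and]
    constructor
    · intro h g hg hall
      obtain ⟨x, hx, hlt⟩ := h g hg
      exact absurd (hall x hx) (not_le.mpr hlt)
    · intro h g hg
      have hh := h g hg
      push_neg at hh
      obtain ⟨x, hx, hlt⟩ := hh
      exact ⟨x, hx, hlt⟩
  rw [hcompl, measure_compl hEmeas (measure_ne_top _ _), measure_univ,
    ENNReal.toReal_sub_of_le prob_le_one ENNReal.one_ne_top, ENNReal.toReal_one]
  linarith
end
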